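/- Let H : [0, ∞) → ℝ^{n×n} be a continuous family of symmetric matrices with least eigenvalue λ_min(H(t)) ≥ λ/2 for all t ≥ 0, where λ > 0. Let z ∈ ℝⁿ and let G : [0, ∞) → ℝⁿ be differentiable with dG/dt = H(t)(z − G(t)). Then ‖z − G(t)‖² ≤ exp(−λt)·‖z − G(0)‖² for all t ≥ 0. -/

import Mathlib

open Matrix

/-- Continuous-time NTK dynamics: if the prediction residual follows the linear dynamics
`dG/dt = H(t)(z − G(t))` with symmetric Gram matrices whose least eigenvalue is at least
`λ/2`, then the squared residual decays linearly (exponentially). -/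
theorem residual_exponential_decay {n : ℕ} (lam : ℝ) (hlam : 0 < lam)
    (H : ℝ → Matrix (Fin n) (Fin n) ℝ) (hcont : Continuous H)
    (hsymm : ∀ t, 0 ≤ t → (H t).IsSymm)
    (heig : ∀ t, 0 ≤ t → ∀ v : Fin n → ℝ, lam / 2 * (v ⬝ᵥ v) ≤ v ⬝ᵥ (H t).mulVec v)
    (z : EuclideanSpace ℝ (Fin n)) (G : ℝ → EuclideanSpace ℝ (Fin n))
    (hG : ∀ t, 0 ≤ t →
      HasDerivAt G ((WithLp.toLp 2 ((H t).mulVec ((z - G t : EuclideanSpace ℝ (Fin n)) : Fin n → ℝ)) :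
        EuclideanSpace ℝ (Fin n))) t) :
    ∀ t, 0 ≤ t → ‖z - G t‖ ^ 2 ≤ Real.exp (-lam * t) * ‖z - G 0‖ ^ 2 := by
  set φ : ℝ → ℝ := fun t => Real.exp (lam * t) * ‖z - G t‖ ^ 2 with hφ
  have hderiv : ∀ t : ℝ, 0 ≤ t → HasDerivAt φ
      (Real.exp (lam * t) * (lam * ‖z - G t‖ ^ 2
        - 2 * ((z - G t : EuclideanSpace ℝ (Fin n)) ⬝ᵥ
            (H t).mulVec ((z - G t : EuclideanSpace ℝ (Fin n)) : Fin n → ℝ)))) t := by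
    intro t ht
    have hu : HasDerivAt (fun s => z - G s)
        (-(WithLp.toLp 2 ((H t).mulVec ((z - G t : EuclideanSpace ℝ (Fin n)) : Fin n → ℝ)) :
          EuclideanSpace ℝ (Fin n))) t := (hG t ht).const_sub z
    have hinner := hu.inner ℝ hu
    have hdp : (inner ℝ (z - G t) ((WithLp.toLp 2 ((H t).mulVec ((z - G t : EuclideanSpace ℝ (Fin n)) : Fin n → ℝ)) :
          EuclideanSpace ℝ (Fin n))) : ℝ)
          = (z - G t : EuclideanSpace ℝ (Fin n)) ⬝ᵥ
            (H t).mulVec ((z - G t : EuclideanSpace ℝ (Fin n)) : Fin n → ℝ) := by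
      simp [PiLp.inner_apply, dotProduct, mul_comm]
    have hsq : HasDerivAt (fun s => ‖z - G s‖ ^ 2)
        (- 2 * ((z - G t : EuclideanSpace ℝ (Fin n)) ⬝ᵥ
            (H t).mulVec ((z - G t : EuclideanSpace ℝ (Fin n)) : Fin n → ℝ))) t := by
      have heq : (fun s => ‖z - G s‖ ^ 2) = fun s => (inner ℝ (z - G s) (z - G s) : ℝ) := by
        funext s; rw [real_inner_self_eq_norm_sq]
      rw [heq]
      refine hinner.congr_deriv ?_
      rw [inner_neg_right, inner_neg_left, hdp, real_inner_comm, hdp]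
      ring
    have hexp : HasDerivAt (fun s => Real.exp (lam * s)) (lam * Real.exp (lam * t)) t := by
      simpa [mul_comm, Function.comp_def] using (Real.hasDerivAt_exp (lam * t)).comp t
        ((hasDerivAt_id t).const_mul lam)
    have := hexp.mul hsq
    refine this.congr_deriv ?_
    ring
  have hmono : AntitoneOn φ (Set.Ici (0:ℝ)) := by
    apply antitoneOn_of_deriv_nonpos (convex_Ici 0)
    · exact fun t ht => ((hderiv t ht).continuousAt.continuousWithinAt)
    · intro t ht
      rw [interior_Ici] at ht
      exact ((hderiv t ht.le).differentiableAt).differentiableWithinAt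
    · intro t ht
      rw [interior_Ici] at ht
      rw [(hderiv t ht.le).deriv]
      have hv := heig t ht.le ((z - G t : EuclideanSpace ℝ (Fin n)) : Fin n → ℝ)
      have hvv : ((z - G t : EuclideanSpace ℝ (Fin n)) : Fin n → ℝ) ⬝ᵥ
          ((z - G t : EuclideanSpace ℝ (Fin n)) : Fin n → ℝ) = ‖z - G t‖ ^ 2 := by
        rw [EuclideanSpace.norm_eq, Real.sq_sqrt (Finset.sum_nonneg (fun i _ => sq_nonneg _))]
        simp [dotProduct, sq, Real.norm_eq_abs]
      apply mul_nonpos_of_nonneg_of_nonpos (Real.exp_pos _).le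
      nlinarith [hv, hvv]
  intro t ht
  have := hmono (Set.self_mem_Ici) ht ht
  simp only [hφ, mul_zero, Real.exp_zero, one_mul] at this
  rw [neg_mul, Real.exp_neg, inv_mul_eq_div, le_div_iff₀ (Real.exp_pos _), mul_comm]
  exact this
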